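/- If a > 1, the equation m = tanh(a m) has exactly three solutions in [−1, 1]: m = 0 and a pair ±m_a with m_a ∈ (0, 1). -/

import Mathlib

open Real Set

lemma tanh_hasDerivAt (x : ℝ) : HasDerivAt Real.tanh (1 / Real.cosh x ^ 2) x := by
  have h := (Real.hasDerivAt_sinh x).div (Real.hasDerivAt_cosh x) (Real.cosh_pos x).ne'
  have : Real.tanh = fun x => Real.sinh x / Real.cosh x := funext fun x => Real.tanh_eq_sinh_div_cosh x
  rw [this]
  refine h.congr_deriv ?_
  rw [← Real.cosh_sq_sub_sinh_sq x]
  ring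

lemma tanh_lt_one' (x : ℝ) : Real.tanh x < 1 := by
  rw [Real.tanh_eq_sinh_div_cosh, div_lt_one (Real.cosh_pos x)]
  exact Real.sinh_lt_cosh x

/-- `tanh x / x` is strictly decreasing on `(0, ∞)`. -/
lemma tanh_div_strictAntiOn : StrictAntiOn (fun x => Real.tanh x / x) (Set.Ioi (0:ℝ)) := by
  have hderiv : ∀ x ∈ interior (Set.Ioi (0:ℝ)),
      HasDerivAt (fun x => Real.tanh x / x)
        ((1 / Real.cosh x ^ 2 * x - Real.tanh x * 1) / x ^ 2) x := by
    intro x hx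
    rw [interior_Ioi] at hx
    exact (tanh_hasDerivAt x).div (hasDerivAt_id x) (ne_of_gt hx)
  apply strictAntiOn_of_deriv_neg (convex_Ioi 0)
  · intro x hx
    exact ((tanh_hasDerivAt x).div (hasDerivAt_id x) (ne_of_gt hx)).continuousAt.continuousWithinAt
  · intro x hx
    rw [(hderiv x hx).deriv]
    rw [interior_Ioi] at hx
    rw [Set.mem_Ioi] at hx
    apply div_neg_of_neg_of_pos _ (pow_pos hx 2)
    rw [sub_neg, mul_one, Real.tanh_eq_sinh_div_cosh, div_mul_eq_mul_div, div_lt_div_iff₀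
      (pow_pos (Real.cosh_pos x) 2) (Real.cosh_pos x)]
    have h1 : x < Real.sinh x := Real.self_lt_sinh_iff.mpr hx
    have h2 : (1:ℝ) ≤ Real.cosh x := Real.one_le_cosh x
    have h3 : 0 < Real.sinh x := lt_trans hx h1
    calc 1 * x * Real.cosh x = x * Real.cosh x := by ring
    _ < Real.sinh x * Real.cosh x := by
        exact mul_lt_mul_of_pos_right h1 (Real.cosh_pos x)
    _ ≤ Real.sinh x * Real.cosh x * Real.cosh x := by
        nlinarith [mul_pos h3 (Real.cosh_pos x)]
    _ = Real.sinh x * (Real.cosh x ^ 2) := by ring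

/-- for `a > 1`, the equation `m = tanh(a m)` has exactly three
solutions in `[−1, 1]`: `0` and a pair `±m_a` with `m_a ∈ (0,1)`. -/
theorem tanh_fixed_points_three (a : ℝ) (ha : 1 < a) :
    ∃ ma : ℝ, ma ∈ Set.Ioo (0 : ℝ) 1 ∧
      {m : ℝ | m ∈ Set.Icc (-1 : ℝ) 1 ∧ m = Real.tanh (a * m)}
        = {-ma, 0, ma} := by
  have ha0 : (0:ℝ) < a := lt_trans one_pos ha
  -- find small x > 0 with tanh x / x > 1/a and x < a
  have hslope : Filter.Tendsto (fun x => Real.tanh x / x) (nhdsWithin 0 (Set.Ioi 0)) (nhds 1) := by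
    have h := (tanh_hasDerivAt 0)
    rw [hasDerivAt_iff_tendsto_slope] at h
    have h1 : (1 : ℝ) / Real.cosh 0 ^ 2 = 1 := by simp
    rw [h1] at h
    have := h.mono_left (nhdsWithin_mono 0 (by intro x hx; exact ne_of_gt hx : Set.Ioi (0:ℝ) ⊆ {(0:ℝ)}ᶜ))
    refine this.congr' ?_
    filter_upwards [self_mem_nhdsWithin] with x hx
    simp [slope_def_field, Real.tanh_zero, div_eq_mul_inv, mul_comm]
  have hev : ∀ᶠ x in nhdsWithin 0 (Set.Ioi (0:ℝ)), 1/a < Real.tanh x / x := by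
    apply hslope.eventually_const_lt
    rw [div_lt_one ha0]; exact ha
  have hev2 : ∀ᶠ x in nhdsWithin 0 (Set.Ioi (0:ℝ)), x < a :=
    eventually_nhdsWithin_of_eventually_nhds (Filter.Tendsto.eventually_lt_const ha0 Filter.tendsto_id)
  obtain ⟨x, ⟨hx1, hx2⟩, hx3⟩ := ((hev.and hev2).and self_mem_nhdsWithin).exists
  -- hx1 : 1/a < tanh x / x, hx2 : x < a, hx3 : x ∈ Ioi 0
  set m₀ := x / a with hm₀
  have hm₀pos : 0 < m₀ := div_pos hx3 ha0
  have hm₀lt : m₀ < 1 := (div_lt_one ha0).mpr hx2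
  have ham₀ : a * m₀ = x := by rw [hm₀]; field_simp
  have hfm₀ : m₀ < Real.tanh (a * m₀) := by
    rw [ham₀]
    have := hx1
    rw [div_lt_div_iff₀ ha0 hx3] at this
    have hxa : 1 * x < Real.tanh x * a := this
    rw [hm₀, div_lt_iff₀ ha0]
    linarith
  -- IVT
  have hcont : ContinuousOn (fun m => Real.tanh (a*m) - m) (Set.Icc m₀ 1) := by
    apply ContinuousOn.sub _ continuousOn_id
    have hct : Continuous Real.tanh :=
      continuous_iff_continuousAt.mpr fun x => (tanh_hasDerivAt x).continuousAt
    exact (hct.comp (continuous_const.mul continuous_id)).continuousOn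
  have hivt := intermediate_value_Icc' (le_of_lt hm₀lt) hcont
  have h0mem : (0:ℝ) ∈ Set.Icc ((fun m => Real.tanh (a*m) - m) 1) ((fun m => Real.tanh (a*m) - m) m₀) := by
    constructor
    · simp only [mul_one]
      linarith [tanh_lt_one' a]
    · simp only []
      linarith
  obtain ⟨ma, hma, hma0⟩ := hivt h0mem
  have hmaeq : Real.tanh (a * ma) = ma := by
    have : Real.tanh (a * ma) - ma = 0 := hma0
    linarith
  have hmapos : 0 < ma := lt_of_lt_of_le hm₀pos hma.1
  have hmalt : ma < 1 := by
    rcases lt_or_eq_of_le hma.2 with h | h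
    · exact h
    · exfalso
      rw [h] at hmaeq
      rw [mul_one] at hmaeq
      linarith [tanh_lt_one' a]
  -- uniqueness helper
  have key : ∀ m : ℝ, 0 < m → Real.tanh (a * m) = m → m = ma := by
    intro m hm hmeq
    have h1 : Real.tanh (a*m) / (a*m) = 1/a := by
      rw [hmeq]; field_simp
    have h2 : Real.tanh (a*ma) / (a*ma) = 1/a := by
      rw [hmaeq]; field_simp
    have hinj := tanh_div_strictAntiOn.injOn
      (Set.mem_Ioi.mpr (by positivity : (0:ℝ) < a*m))
      (Set.mem_Ioi.mpr (by positivity : (0:ℝ) < a*ma))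
      (by rw [h1, h2])
    exact mul_left_cancel₀ (ne_of_gt ha0) hinj
  refine ⟨ma, ⟨hmapos, hmalt⟩, ?_⟩
  ext m
  simp only [Set.mem_setOf_eq, Set.mem_insert_iff, Set.mem_singleton_iff, Set.mem_Icc]
  constructor
  · rintro ⟨⟨hml, hmr⟩, hmeq⟩
    rcases lt_trichotomy m 0 with h | h | h
    · left
      have hneg : Real.tanh (a * (-m)) = -m := by
        rw [mul_neg, Real.tanh_neg, ← hmeq]
      have := key (-m) (by linarith) hneg
      linarith
    · right; left; exact h
    · right; right; exact (key m h hmeq.symm)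
  · rintro (h | h | h) <;> subst h
    · refine ⟨⟨by linarith, by linarith⟩, ?_⟩
      rw [mul_neg, Real.tanh_neg, hmaeq]
    · simp
    · exact ⟨⟨by linarith, le_of_lt hmalt⟩, hmaeq.symm⟩
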